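/- The natural map E(K) ⊗_ℤ ℚp/ℤp → (E(L) ⊗_ℤ ℚp/ℤp)^G induced by the inclusion E(K) ⊆ E(L), whose image lands in the G-invariants, has finite kernel and finite cokernel. -/

import Mathlib

open PowerSeries

variable (p : ℕ) [Fact p.Prime]

abbrev Lam := PowerSeries ℤ_[p]

noncomputable def omeg (n : ℕ) : Lam p := (PowerSeries.X + 1) ^ (p ^ n) - 1

noncomputable def Phi (n : ℕ) : Lam p :=
  ((Polynomial.cyclotomic (p ^ n) ℤ_[p]).comp (Polynomial.X + 1) : Polynomial ℤ_[p])

abbrev QZ := ℚ_[p] ⧸ (LinearMap.range (Algebra.linearMap ℤ_[p] ℚ_[p]))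

/-- Contravariant module structure on the Pontryagin dual `N →+ ℚ_[p]/ℤ_[p]`:
`(c • f) x = f (c • x)`. -/
noncomputable instance dualSMul (R : Type*) [CommRing R] (N : Type*) [AddCommGroup N]
    [Module R N] : SMul R (N →+ QZ p) :=
  ⟨fun c f => f.comp (DistribMulAction.toAddMonoidHom N c)⟩

lemma dual_smul_apply (R : Type*) [CommRing R] (N : Type*) [AddCommGroup N] [Module R N]
    (c : R) (f : N →+ QZ p) (x : N) : (c • f) x = f (c • x) := rfl

noncomputable instance dualModule (R : Type*) [CommRing R] (N : Type*) [AddCommGroup N]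
    [Module R N] : Module R (N →+ QZ p) where
  one_smul f := by ext x; rw [dual_smul_apply, one_smul]
  mul_smul a b f := by
    ext x
    rw [dual_smul_apply, dual_smul_apply, dual_smul_apply, mul_comm, mul_smul]
  smul_zero a := by ext x; rw [dual_smul_apply]; rfl
  smul_add a f g := by
    ext x
    rw [dual_smul_apply, AddMonoidHom.add_apply, AddMonoidHom.add_apply,
      dual_smul_apply, dual_smul_apply]
  add_smul a b f := by
    ext x
    rw [dual_smul_apply, AddMonoidHom.add_apply, dual_smul_apply, dual_smul_apply,
      add_smul, map_add]
  zero_smul f := by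
    ext x
    rw [dual_smul_apply, zero_smul, map_zero]; rfl

/-- The p-primary torsion submodule. -/
def pTors (R : Type*) [CommRing R] (N : Type*) [AddCommGroup N] [Module R N] :
    Submodule R N where
  carrier := {x | ∃ k : ℕ, (p ^ k : ℕ) • x = 0}
  add_mem' := by
    rintro a b ⟨k, hk⟩ ⟨l, hl⟩
    exact ⟨k + l, by
      rw [smul_add, pow_add, mul_smul, mul_smul, hl, smul_zero, add_zero, smul_comm, hk,
        smul_zero]⟩
  zero_mem' := ⟨0, smul_zero _⟩
  smul_mem' := by
    rintro c x ⟨k, hk⟩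
    exact ⟨k, by rw [smul_comm, hk, smul_zero]⟩

/-- The p-adic Tate module of `N`, realized as compatible sequences in `∏ N[p^k]`. -/
def TateSub (R : Type*) [CommRing R] (N : Type*) [AddCommGroup N] [Module R N] :
    Submodule R (ℕ → N) where
  carrier := {f | (∀ k, (p ^ k : ℕ) • f k = 0) ∧ ∀ k, (p : ℕ) • f (k + 1) = f k}
  add_mem' := by
    rintro f g ⟨hf1, hf2⟩ ⟨hg1, hg2⟩
    refine ⟨fun k => ?_, fun k => ?_⟩
    · show (p ^ k : ℕ) • (f k + g k) = 0
      rw [smul_add, hf1 k, hg1 k, add_zero]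
    · show (p : ℕ) • (f (k + 1) + g (k + 1)) = f k + g k
      rw [smul_add, hf2 k, hg2 k]
  zero_mem' := ⟨fun k => smul_zero _, fun k => smul_zero _⟩
  smul_mem' := by
    rintro c f ⟨hf1, hf2⟩
    refine ⟨fun k => ?_, fun k => ?_⟩
    · show (p ^ k : ℕ) • (c • f k) = 0
      rw [smul_comm, hf1 k, smul_zero]
    · show (p : ℕ) • (c • f (k + 1)) = c • f k
      rw [smul_comm, hf2 k]

/-- The inverse limit of an inverse system of modules. -/
def invLim (R : Type*) [CommRing R] (N : ℕ → Type*) [∀ n, AddCommGroup (N n)]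
    [∀ n, Module R (N n)] (t : ∀ n, N (n + 1) →ₗ[R] N n) : Submodule R (∀ n, N n) where
  carrier := {f | ∀ n, t n (f (n + 1)) = f n}
  add_mem' := by
    intro f g hf hg n
    show t n (f (n + 1) + g (n + 1)) = f n + g n
    rw [map_add, hf n, hg n]
  zero_mem' := fun n => map_zero _
  smul_mem' := by
    intro c f hf n
    show t n (c • f (n + 1)) = c • f n
    rw [map_smul, hf n]

/-- The submodule `c • N` of a module `N`. -/
noncomputable def smulSub (R : Type*) [CommRing R] (N : Type*) [AddCommGroup N] [Module R N]
    (c : R) : Submodule R N :=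
  LinearMap.range (LinearMap.lsmul R N c)

/-- The `Γ_n`-coinvariants `N/ω_n N` of a `Λ`-module `N`. -/
abbrev coinv (n : ℕ) (N : Type*) [AddCommGroup N] [Module (Lam p) N] :=
  N ⧸ smulSub (Lam p) N (omeg p n)

lemma omeg_dvd (n : ℕ) : omeg p n ∣ omeg p (n + 1) := by
  have h := sub_dvd_pow_sub_pow ((PowerSeries.X + 1 : Lam p) ^ (p ^ n)) 1 p
  rw [← pow_mul, one_pow, ← pow_succ] at h
  exact h

/-- The natural projection between successive coinvariants. -/
noncomputable def coinvTrans (n : ℕ) (N : Type*) [AddCommGroup N] [Module (Lam p) N] :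
    coinv p (n + 1) N →ₗ[Lam p] coinv p n N :=
  Submodule.mapQ _ _ LinearMap.id
    (by
      rintro x ⟨m, rfl⟩
      obtain ⟨c, hc⟩ := omeg_dvd p n
      refine ⟨c • m, ?_⟩
      show omeg p n • c • m = LinearMap.id (omeg p (n + 1) • m)
      rw [smul_smul, ← hc]
      rfl)

section system

variable (M : ℕ → Type*) [∀ n, AddCommGroup (M n)] [∀ n, Module (Lam p) (M n)]
  (t : ∀ n, M (n + 1) →ₗ[Lam p] M n)

/-- `M = lim M_n`. -/
abbrev Mlim := ↥(invLim (Lam p) M t)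

/-- The projection from the limit to the `n`-th level. -/
noncomputable def projN (n : ℕ) : Mlim p M t →ₗ[Lam p] M n :=
  (LinearMap.proj n).comp (invLim (Lam p) M t).subtype

/-- The induced map `M_{Γ_n} → M_n`. -/
noncomputable def indMap (hω : ∀ n (x : M n), omeg p n • x = 0) (n : ℕ) :
    coinv p n (Mlim p M t) →ₗ[Lam p] M n :=
  Submodule.liftQ _ (projN p M t n)
    (by
      rintro x ⟨m, rfl⟩
      show projN p M t n (omeg p n • m) = 0
      rw [map_smul]
      exact hω n _)

/-- The transition maps on the torsion-free quotients `M_{n,f}`. -/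
noncomputable def tf (n : ℕ) :
    (M (n + 1) ⧸ pTors p (Lam p) (M (n + 1))) →ₗ[Lam p] (M n ⧸ pTors p (Lam p) (M n)) :=
  Submodule.mapQ _ _ (t n)
    (by
      rintro x ⟨k, hk⟩
      exact ⟨k, by rw [← map_nsmul, hk, map_zero]⟩)

/-- `M_f = lim M_{n,f}`. -/
abbrev Mf := ↥(invLim (Lam p) (fun n => M n ⧸ pTors p (Lam p) (M n)) (tf p M t))

end system

/-- The Pontryagin-dual map induced by a linear map. -/
noncomputable def dualMap (R : Type*) [CommRing R] {A B : Type*} [AddCommGroup A] [Module R A]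
    [AddCommGroup B] [Module R B] (f : A →ₗ[R] B) : (B →+ QZ p) →ₗ[R] (A →+ QZ p) where
  toFun g := g.comp f.toAddMonoidHom
  map_add' g₁ g₂ := by ext x; rfl
  map_smul' c g := by
    ext x
    show g (c • f x) = g (f (c • x))
    exact congrArg g (f.map_smul c x).symm

/-- The map on Tate modules induced by a linear map. -/
noncomputable def tateMap (R : Type*) [CommRing R] {N N' : Type*} [AddCommGroup N] [Module R N]
    [AddCommGroup N'] [Module R N'] (φ : N →ₗ[R] N') :
    ↥(TateSub p R N) →ₗ[R] ↥(TateSub p R N') where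
  toFun x := ⟨fun k => φ (x.1 k), by
    obtain ⟨h1, h2⟩ := x.2
    exact ⟨fun k => by rw [← map_nsmul, h1 k, map_zero],
      fun k => by rw [← map_nsmul, h2 k]⟩⟩
  map_add' x y := by ext k; exact map_add φ _ _
  map_smul' c x := by ext k; exact map_smul φ _ _

/-- The map on Tate modules induced by an additive endomorphism. -/
def tateAct (R : Type*) [CommRing R] {N : Type*} [AddCommGroup N] [Module R N] (g : N →+ N)
    (x : ↥(TateSub p R N)) : ↥(TateSub p R N) :=
  ⟨fun k => g (x.1 k), by
    obtain ⟨h1, h2⟩ := x.2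
    exact ⟨fun k => by rw [← map_nsmul, h1 k, map_zero],
      fun k => by rw [← map_nsmul, h2 k]⟩⟩

open Classical WeierstrassCurve WeierstrassCurve.Affine in
/-- The subgroup of `G = Gal(L/K)`-invariants of `E(L) ⊗_ℤ ℚp/ℤp`. -/
noncomputable def galInv (p : ℕ) [Fact p.Prime] (K L : Type) [Field K] [Field L] [Algebra K L]
    (W : WeierstrassCurve K) :
    AddSubgroup (TensorProduct ℤ (QZ p) ((W.toAffine⁄L).Point)) where
  carrier := {x | ∀ g : L ≃ₐ[K] L,
    TensorProduct.map (LinearMap.id (R := ℤ) (M := QZ p))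
      (Point.map (W' := W.toAffine) g.toAlgHom).toIntLinearMap x = x}
  add_mem' := by
    intro a b ha hb g
    rw [map_add, ha g, hb g]
  zero_mem' := fun g => map_zero _
  neg_mem' := by
    intro a ha g
    rw [map_neg, ha g]


/-! ### Auxiliary lemmas for Statement 11 -/

section Statement11Aux

lemma qz_mk_surj : Function.Surjective
    (Submodule.Quotient.mk : ℚ_[p] → QZ p) := Submodule.Quotient.mk_surjective _

lemma qz_mk_eq_zero_iff (x : ℚ_[p]) :
    (Submodule.Quotient.mk x : QZ p) = 0 ↔ ‖x‖ ≤ 1 := by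
  rw [Submodule.Quotient.mk_eq_zero]
  constructor
  · rintro ⟨z, rfl⟩; exact z.2
  · intro h; exact ⟨⟨x, h⟩, rfl⟩

lemma qz_smul_mk (n : ℤ) (x : ℚ_[p]) :
    n • (Submodule.Quotient.mk x : QZ p) = Submodule.Quotient.mk ((n : ℚ_[p]) * x) := by
  rw [← zsmul_eq_mul]
  exact (map_zsmul ((LinearMap.range (Algebra.linearMap ℤ_[p] ℚ_[p])).mkQ).toAddMonoidHom n x).symm

lemma qz_tors (t : QZ p) : ∃ k : ℕ, ((p : ℤ) ^ k) • t = 0 := by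
  obtain ⟨q, rfl⟩ := qz_mk_surj p t
  obtain ⟨k, hk⟩ := pow_unbounded_of_one_lt ‖q‖ (by exact_mod_cast (Fact.out : p.Prime).one_lt : (1:ℝ) < p)
  refine ⟨k, ?_⟩
  rw [qz_smul_mk, qz_mk_eq_zero_iff]
  push_cast
  rw [norm_mul, norm_pow, Padic.norm_p, inv_pow,
    inv_mul_le_iff₀ (by exact pow_pos (by exact_mod_cast (Fact.out : p.Prime).pos) k), mul_one]
  exact hk.le

lemma qz_mk_sub_eq_zero (x y : ℚ_[p]) (h : ‖x - y‖ ≤ 1) :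
    (Submodule.Quotient.mk x : QZ p) = Submodule.Quotient.mk y := by
  rw [← sub_eq_zero, ← Submodule.Quotient.mk_sub, qz_mk_eq_zero_iff]
  exact h

lemma qz_pow_tors_finite (v : ℕ) : Finite {t : QZ p // ((p:ℤ) ^ v) • t = 0} := by
  have hpv : ((p : ℚ_[p]) ^ v) ≠ 0 := by
    exact pow_ne_zero _ (by exact_mod_cast (Fact.out : p.Prime).ne_zero)
  have key : ∀ t : {t : QZ p // ((p:ℤ) ^ v) • t = 0}, ∃ z : ℤ_[p],
      (t : QZ p) = Submodule.Quotient.mk ((z : ℚ_[p]) / (p : ℚ_[p]) ^ v) := by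
    rintro ⟨t, ht⟩
    obtain ⟨q, rfl⟩ := qz_mk_surj p t
    rw [qz_smul_mk, qz_mk_eq_zero_iff] at ht
    push_cast at ht
    refine ⟨⟨(p : ℚ_[p]) ^ v * q, ht⟩, ?_⟩
    have hcoe : ((⟨(p : ℚ_[p]) ^ v * q, ht⟩ : ℤ_[p]) : ℚ_[p]) = (p : ℚ_[p]) ^ v * q := rfl
    rw [hcoe, mul_comm, mul_div_assoc, div_self hpv, mul_one]
  choose z hz using key
  refine Finite.of_injective (fun t => PadicInt.toZModPow v (z t)) ?_
  intro t₁ t₂ h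
  dsimp only at h
  have hker : z t₁ - z t₂ ∈ RingHom.ker (PadicInt.toZModPow v) := by
    rw [RingHom.mem_ker, map_sub, h, sub_self]
  rw [PadicInt.ker_toZModPow, Ideal.mem_span_singleton] at hker
  obtain ⟨w, hw⟩ := hker
  apply Subtype.ext
  rw [hz t₁, hz t₂]
  apply qz_mk_sub_eq_zero
  rw [div_sub_div_same]
  have heq : ((z t₁ : ℚ_[p]) - (z t₂ : ℚ_[p])) / (p:ℚ_[p])^v = (w : ℚ_[p]) := by
    rw [div_eq_iff hpv]
    have := congrArg (fun z : ℤ_[p] => (z : ℚ_[p])) hw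
    push_cast at this ⊢
    rw [this]; ring
  rw [heq]
  exact w.2

lemma qz_ntors_finite (n : ℤ) (hn : n ≠ 0) : Finite {t : QZ p // n • t = 0} := by
  have hp : p.Prime := Fact.out
  set v := (n.natAbs).factorization p with hv
  have hdvd : ∀ t : QZ p, n • t = 0 → ((p:ℤ) ^ v) • t = 0 := by
    intro t ht
    obtain ⟨k, hk⟩ := qz_tors p t
    have hg : (Int.gcd n ((p:ℤ)^k) : ℤ) • t = 0 := by
      have hab := Int.gcd_eq_gcd_ab n ((p:ℤ)^k)
      rw [hab, add_smul, mul_comm n, mul_comm ((p:ℤ)^k), mul_smul, mul_smul, ht, hk,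
        smul_zero, smul_zero, add_zero]
    -- gcd n (p^k) divides p^v
    have hgd : (Int.gcd n ((p:ℤ)^k) : ℤ) ∣ (p:ℤ)^v := by
      have h1 : Int.gcd n ((p:ℤ)^k) ∣ p ^ k := by
        have h := Int.natAbs_dvd_natAbs.mpr (Int.gcd_dvd_right (a := n) (b := (p:ℤ)^k))
        simpa [Int.natAbs_pow] using h
      obtain ⟨j, hjk, hgj⟩ := (Nat.dvd_prime_pow hp).mp h1
      have h2 : p ^ j ∣ n.natAbs := by
        have h := Int.natAbs_dvd_natAbs.mpr (Int.gcd_dvd_left (a := n) (b := (p:ℤ)^k))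
        simp only [Int.natAbs_natCast] at h
        rwa [hgj] at h
      have hjv : j ≤ v := by
        rw [hv]
        exact (Nat.Prime.pow_dvd_iff_le_factorization hp (Int.natAbs_ne_zero.mpr hn)).mp h2
      have : Int.gcd n ((p:ℤ)^k) ∣ p ^ v := hgj ▸ pow_dvd_pow p hjv
      exact_mod_cast Int.natCast_dvd_natCast.mpr this
    obtain ⟨c, hc⟩ := hgd
    rw [hc, mul_comm, mul_smul, hg, smul_zero]
  have hmem : ∀ t : {t : QZ p // n • t = 0}, ((p:ℤ)^v) • (t : QZ p) = 0 := fun t => hdvd t t.2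
  have hfin := qz_pow_tors_finite p v
  refine Finite.of_injective (fun t => (⟨t.1, hmem t⟩ : {t : QZ p // ((p:ℤ)^v) • t = 0})) ?_
  intro a b h
  have h' : (⟨a.1, hmem a⟩ : {t : QZ p // ((p:ℤ)^v) • t = 0}) = ⟨b.1, hmem b⟩ := h
  apply Subtype.ext
  exact congrArg (fun x : {t : QZ p // ((p:ℤ)^v) • t = 0} => x.val) h' 

lemma qz_div (n : ℤ) (hn : n ≠ 0) (t : QZ p) : ∃ s : QZ p, n • s = t := by
  obtain ⟨q, rfl⟩ := qz_mk_surj p t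
  refine ⟨Submodule.Quotient.mk ((n : ℚ_[p])⁻¹ * q), ?_⟩
  rw [qz_smul_mk, ← mul_assoc, mul_inv_cancel₀ (by exact_mod_cast hn), one_mul]

lemma qz_cyclic (h t : QZ p) (m : ℕ) (hm : ((p:ℤ) ^ (m+1)) • h = 0)
    (hm' : ((p:ℤ) ^ m) • h ≠ 0) (ht : ((p:ℤ) ^ (m+1)) • t = 0) : ∃ c : ℤ, t = c • h := by
  have hp : p.Prime := Fact.out
  have hpQ : ((p : ℚ_[p])) ≠ 0 := by exact_mod_cast hp.ne_zero
  have hP : ((p : ℚ_[p]) ^ (m+1)) ≠ 0 := pow_ne_zero _ hpQ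
  obtain ⟨q, rfl⟩ := qz_mk_surj p h
  obtain ⟨r, rfl⟩ := qz_mk_surj p t
  rw [qz_smul_mk, qz_mk_eq_zero_iff] at hm ht
  push_cast at hm ht
  set z : ℤ_[p] := ⟨(p:ℚ_[p])^(m+1) * q, hm⟩ with hz
  set w : ℤ_[p] := ⟨(p:ℚ_[p])^(m+1) * r, ht⟩ with hw
  have hzq : (z : ℚ_[p]) = (p:ℚ_[p])^(m+1) * q := rfl
  have hwr : (w : ℚ_[p]) = (p:ℚ_[p])^(m+1) * r := rfl
  -- z is a unit
  have hzu : IsUnit z := by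
    rw [PadicInt.isUnit_iff]
    by_contra hne
    have hlt : ‖z‖ < 1 := lt_of_le_of_ne z.2 hne
    rw [PadicInt.norm_lt_one_iff_dvd] at hlt
    obtain ⟨e, he⟩ := hlt
    apply hm'
    rw [qz_smul_mk, qz_mk_eq_zero_iff]
    push_cast
    have hcast : (p:ℚ_[p])^(m+1) * q = (p:ℚ_[p]) * (e:ℚ_[p]) := by
      rw [← hzq, he]; push_cast; ring
    have hq : (p:ℚ_[p])^m * q = (e : ℚ_[p]) := by
      apply mul_left_cancel₀ hpQ
      rw [← hcast, pow_succ]; ring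
    rw [hq]
    exact e.2
  obtain ⟨u, hu⟩ := hzu
  set c₀ : ℤ_[p] := w * ↑u⁻¹ with hc₀def
  have hc₀ : c₀ * z = w := by
    rw [hc₀def, ← hu, mul_assoc, Units.inv_mul, mul_one]
  set cn : ℕ := PadicInt.appr c₀ (m+1) with hcn
  have hspec := PadicInt.appr_spec (m+1) c₀
  rw [Ideal.mem_span_singleton] at hspec
  obtain ⟨e, he⟩ := hspec
  refine ⟨(cn : ℤ), ?_⟩
  rw [qz_smul_mk]
  apply (qz_mk_sub_eq_zero p r (((cn:ℤ) : ℚ_[p]) * q) ?_).symm.symm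
  -- key: r - cn * q = ↑(e * z + cn-part)
  have key : (p:ℚ_[p])^(m+1) * (r - ((cn:ℤ) : ℚ_[p]) * q) = (p:ℚ_[p])^(m+1) * ((e * z : ℤ_[p]) : ℚ_[p]) := by
    have h1 : (p:ℚ_[p])^(m+1) * (r - ((cn:ℤ) : ℚ_[p]) * q)
        = ((w - (cn : ℤ_[p]) * z : ℤ_[p]) : ℚ_[p]) := by
      push_cast
      ring
    have h2 : w - (cn : ℤ_[p]) * z = (p : ℤ_[p])^(m+1) * (e * z) := by
      rw [← hc₀, ← sub_mul, he]; ring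
    rw [h1, h2]
    push_cast
    ring
  have heq := mul_left_cancel₀ hP key
  rw [heq]
  exact (e * z).2

lemma qz_subgroup (H : AddSubgroup (QZ p)) : (∀ t : QZ p, t ∈ H) ∨ Finite H := by
  classical
  by_cases hfin : Finite H
  · exact Or.inr hfin
  left
  intro t
  obtain ⟨k, hk⟩ := qz_tors p t
  have hex_h : ∃ h ∈ H, ((p:ℤ)^k) • h ≠ 0 := by
    by_contra hc
    push_neg at hc
    apply hfin
    have hfin' := qz_ntors_finite p ((p:ℤ)^k)
      (pow_ne_zero _ (by exact_mod_cast (Fact.out : p.Prime).ne_zero))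
    refine Finite.of_injective
      (fun x : H => (⟨x.1, hc x.1 x.2⟩ : {t : QZ p // ((p:ℤ)^k) • t = 0})) ?_
    intro a b hab
    exact Subtype.ext (congrArg (fun y : {t : QZ p // ((p:ℤ)^k) • t = 0} => y.val) hab)
  obtain ⟨h, hH, hne⟩ := hex_h
  have hex : ∃ j, ((p:ℤ)^j) • h = 0 := qz_tors p h
  have hm0 : ((p:ℤ)^(Nat.find hex)) • h = 0 := Nat.find_spec hex
  have hkm : k < Nat.find hex := by
    by_contra hle
    push_neg at hle
    apply hne
    have hsplit : (p:ℤ)^k = (p:ℤ)^(k - Nat.find hex) * (p:ℤ)^(Nat.find hex) := by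
      rw [← pow_add]; congr 1; omega
    rw [hsplit, mul_smul, hm0, smul_zero]
  obtain ⟨m', hm'⟩ : ∃ m', Nat.find hex = m' + 1 := ⟨Nat.find hex - 1, by omega⟩
  have hmin : ((p:ℤ)^m') • h ≠ 0 := Nat.find_min hex (by omega)
  have hm1 : ((p:ℤ)^(m'+1)) • h = 0 := by rw [← hm']; exact hm0
  have ht : ((p:ℤ)^(m'+1)) • t = 0 := by
    have hsplit : (p:ℤ)^(m'+1) = (p:ℤ)^(m'+1-k) * (p:ℤ)^k := by
      rw [← pow_add]; congr 1; omega
    rw [hsplit, mul_smul, hk, smul_zero]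
  obtain ⟨c, hc⟩ := qz_cyclic p h t m' hm1 hmin ht
  rw [hc]
  exact AddSubgroup.zsmul_mem H hH c

/-- Any subquotient of `(QZ p)^s` killed by a nonzero integer is finite. -/
lemma subquot_finite : ∀ (s : ℕ) (C : Type) [AddCommGroup C], ∀ (n : ℤ), n ≠ 0 →
    (∀ c : C, n • c = 0) → ∀ (H : AddSubgroup (Fin s → QZ p)) (π : H →+ C),
    Function.Surjective π → Finite C := by
  intro s
  induction s with
  | zero =>
    intro C _ n hn hC H π hπ
    have : ∀ c : C, c = 0 := by
      intro c
      obtain ⟨h, rfl⟩ := hπ c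
      have : h = 0 := Subtype.ext (funext (fun i => Fin.elim0 i))
      rw [this, map_zero]
    exact Finite.of_surjective (fun _ : Unit => (0 : C)) (fun c => ⟨(), (this c).symm⟩)
  | succ s IH =>
    intro C _ n hn hC H π hπ
    -- evaluation at the last coordinate
    let ρ : (Fin (s+1) → QZ p) →+ QZ p := Pi.evalAddMonoidHom _ (Fin.last s)
    -- restriction to the first coordinates
    let δ : (Fin (s+1) → QZ p) →+ (Fin s → QZ p) :=
      { toFun := fun f i => f i.castSucc
        map_zero' := rfl
        map_add' := fun f g => rfl }
    have hδρ : ∀ x : Fin (s+1) → QZ p, δ x = 0 → ρ x = 0 → x = 0 := by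
      intro x h1 h2
      funext i
      refine Fin.lastCases ?_ ?_ i
      · exact h2
      · intro j; exact congrFun h1 j
    -- the subgroup of H with last coordinate zero
    let ρ' : H →+ QZ p := ρ.comp H.subtype
    let K : AddSubgroup H := ρ'.ker
    let C₀ : AddSubgroup C := K.map π
    have hC₀ : ∀ c : C, n • c = 0 := hC
    -- C₀ is finite by induction
    have hfinC₀ : Finite C₀ := by
      let δ' : H →+ (Fin s → QZ p) := δ.comp H.subtype
      let ν : K →+ C₀ :=
        { toFun := fun x => ⟨π x.1, ⟨x.1, x.2, rfl⟩⟩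
          map_zero' := by apply Subtype.ext; simp
          map_add' := fun x y => by apply Subtype.ext; simp }
      have hν : Function.Surjective ν := by
        rintro ⟨c, x, hx, rfl⟩
        exact ⟨⟨x, hx⟩, rfl⟩
      let μ : K →+ (Fin s → QZ p) := δ'.comp K.subtype
      have hμ : Function.Injective μ := by
        intro a b hab
        apply Subtype.ext; apply Subtype.ext
        rw [← sub_eq_zero]
        apply hδρ _ ?_ ?_
        · show δ ((a.1 : Fin (s+1) → QZ p) - b.1) = 0
          rw [map_sub]
          have hδab : δ' a.1 = δ' b.1 := hab
          show δ' a.1 - δ' b.1 = 0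
          rw [hδab, sub_self]
        · show ρ ((a.1 : Fin (s+1) → QZ p) - b.1) = 0
          have ha : ρ' a.1 = 0 := a.2
          have hb : ρ' b.1 = 0 := b.2
          rw [map_sub]
          show ρ' a.1 - ρ' b.1 = 0
          rw [ha, hb, sub_self]
      -- transfer K to a subgroup of (Fin s → QZ p)
      let e : K ≃+ μ.range := AddMonoidHom.ofInjective hμ
      have hC₀n : ∀ c : C₀, n • c = 0 := fun c => Subtype.ext (by
        show n • (c : C) = 0
        exact hC _)
      refine IH C₀ n hn hC₀n μ.range (ν.comp e.symm.toAddMonoidHom) ?_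
      intro c
      obtain ⟨k, rfl⟩ := hν c
      refine ⟨e k, ?_⟩
      show ν (e.symm (e k)) = ν k
      rw [AddEquiv.symm_apply_apply]
    -- C / C₀ is finite
    have hfinQ : Finite (C ⧸ C₀) := by
      -- σ : H →+ C ⧸ C₀, kernel contains K
      let σ : H →+ C ⧸ C₀ := (QuotientAddGroup.mk' C₀).comp π
      have hσ : Function.Surjective σ :=
        (QuotientAddGroup.mk'_surjective C₀).comp hπ
      have hKσ : ∀ x ∈ K, σ x = 0 := by
        intro x hx
        show QuotientAddGroup.mk' C₀ (π x) = 0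
        rw [QuotientAddGroup.mk'_apply, QuotientAddGroup.eq_zero_iff]
        exact ⟨x, hx, rfl⟩
      -- factor through H ⧸ K ≃ range ρ'
      have hK : K = ρ'.ker := rfl
      let σbar : H ⧸ K →+ C ⧸ C₀ := QuotientAddGroup.lift K σ hKσ
      have hσbar : Function.Surjective σbar := by
        intro c
        obtain ⟨h, rfl⟩ := hσ c
        exact ⟨QuotientAddGroup.mk h, rfl⟩
      let eH : H ⧸ K ≃+ ρ'.range := QuotientAddGroup.quotientKerEquivRange ρ'
      let τ : ρ'.range →+ C ⧸ C₀ := σbar.comp eH.symm.toAddMonoidHom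
      have hτ : Function.Surjective τ := hσbar.comp eH.symm.surjective
      -- the range of ρ' is either all of QZ p or finite
      have hQn : ∀ c : C ⧸ C₀, n • c = 0 := by
        intro c
        obtain ⟨c₀, rfl⟩ := QuotientAddGroup.mk'_surjective C₀ c
        rw [← map_zsmul, hC, map_zero]
      rcases qz_subgroup p ρ'.range with htop | hfin2
      · -- divisible case : C ⧸ C₀ is trivial
        have : ∀ c : C ⧸ C₀, c = 0 := by
          intro c
          obtain ⟨x, rfl⟩ := hτ c
          obtain ⟨t, ht⟩ := qz_div p n hn x.1
          have hx : x = n • ⟨t, htop t⟩ := Subtype.ext ht.symm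
          rw [hx, map_zsmul]
          exact hQn _
        exact Finite.of_surjective (fun _ : Unit => (0 : C ⧸ C₀)) (fun c => ⟨(), (this c).symm⟩)
      · exact Finite.of_surjective τ hτ
    -- conclude
    have e := AddSubgroup.addGroupEquivQuotientProdAddSubgroup (s := C₀)
    exact Finite.of_equiv _ e.symm

open LinearMap TensorProduct

section Generic

variable {R : Type} [CommRing R] [IsDomain R] [IsPrincipalIdealRing R]
variable {T : Type} [AddCommGroup T] [Module R T]
variable (hdiv : ∀ r : R, r ≠ 0 → ∀ t : T, ∃ s : T, r • s = t)

include hdiv in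
lemma lTensor_mkQ_torsion_bijective' (M : Type) [AddCommGroup M] [Module R M] :
    Function.Bijective (lTensor T (Submodule.torsion R M).mkQ) := by
  constructor
  · rw [← LinearMap.ker_eq_bot, lTensor_mkQ]
    rw [LinearMap.range_eq_bot.mpr ?_]
    apply TensorProduct.ext'
    rintro t ⟨a, ⟨n, hn⟩⟩
    have hn' : (n : R) • (a : M) = 0 := by
      simpa [Submonoid.smul_def] using hn
    obtain ⟨s, hs⟩ := hdiv (n : R) (mem_nonZeroDivisors_iff_ne_zero.mp n.2) t
    show t ⊗ₜ[R] (a : M) = (0 : T ⊗[R] M)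
    rw [← hs, TensorProduct.smul_tmul, hn']
    exact tmul_zero _ _
  · exact lTensor_surjective _ (Submodule.mkQ_surjective _)

include hdiv in
lemma tensor_pi_equiv' (M : Type) [AddCommGroup M] [Module R M] [Module.Finite R M] :
    ∃ s : ℕ, Nonempty ((T ⊗[R] M) ≃ₗ[R] (Fin s → T)) := by
  classical
  let M₁ := M ⧸ Submodule.torsion R M
  have hfree : Module.Free R M₁ := inferInstance
  let b := Module.Free.chooseBasis R M₁
  let ι := Module.Free.ChooseBasisIndex R M₁
  let e1 : (T ⊗[R] M) ≃ₗ[R] (T ⊗[R] M₁) :=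
    LinearEquiv.ofBijective _ (lTensor_mkQ_torsion_bijective' hdiv M)
  let e2 : (T ⊗[R] M₁) ≃ₗ[R] (T ⊗[R] (ι → R)) :=
    TensorProduct.congr (LinearEquiv.refl R T) b.equivFun
  let e3 : (T ⊗[R] (ι → R)) ≃ₗ[R] (ι → T) :=
    TensorProduct.piScalarRight R R T ι
  let e4 : (ι → T) ≃ₗ[R] (Fin (Fintype.card ι) → T) :=
    LinearEquiv.piCongrLeft' R (fun _ : ι => T) (Fintype.equivFin ι)
  exact ⟨Fintype.card ι, ⟨e1.trans (e2.trans (e3.trans e4))⟩⟩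

end Generic

/-- Master finiteness lemma: any subquotient of a tensor `QZ p ⊗ M` with `M` finitely
generated that is killed by a nonzero integer is finite. -/
lemma main_fin (M : Type) [AddCommGroup M] [Module ℤ M] [Module.Finite ℤ M]
    (hdiv : ∀ r : ℤ, r ≠ 0 → ∀ t : QZ p, ∃ s : QZ p, r • s = t)
    (C : Type) [AddCommGroup C] (n : ℤ) (hn : n ≠ 0) (hC : ∀ c : C, n • c = 0)
    (H : AddSubgroup ((QZ p) ⊗[ℤ] M)) (π : H →+ C) (hπ : Function.Surjective π) :
    Finite C := by
  obtain ⟨s, ⟨e⟩⟩ := tensor_pi_equiv' hdiv M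
  let e' := e.toAddEquiv
  let H' : AddSubgroup (Fin s → QZ p) := H.map e'.toAddMonoidHom
  let eH : H ≃+ H' := AddEquiv.addSubgroupMap e' H
  refine subquot_finite p s C n hn hC H' (π.comp eH.symm.toAddMonoidHom) ?_
  intro c
  obtain ⟨h, rfl⟩ := hπ c
  refine ⟨eH h, ?_⟩
  show π (eH.symm (eH h)) = π h
  rw [AddEquiv.symm_apply_apply]

section Generic2

variable {R : Type} [CommRing R] [IsDomain R] [IsPrincipalIdealRing R]
variable {T : Type} [AddCommGroup T] [Module R T]
variable {A B : Type} [AddCommGroup A] [Module R A] [AddCommGroup B] [Module R B]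
  [Module.Finite R B]

/-- Given an injective map `f : A → B` with `B` finitely generated over a PID, some nonzero
`d : R` kills the kernel of `T ⊗ f`. -/
lemma split_lemma (hdiv : ∀ r : R, r ≠ 0 → ∀ t : T, ∃ s : T, r • s = t)
    (f : A →ₗ[R] B) (hf : Function.Injective f) :
    ∃ d : R, d ≠ 0 ∧ ∀ x : T ⊗[R] A, lTensor T f x = 0 → d • x = 0 := by
  classical
  -- the induced map on torsion-free quotients
  have hle : Submodule.torsion R A ≤ (Submodule.torsion R B).comap f := by
    rintro a ⟨n, hn⟩
    refine ⟨n, ?_⟩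
    show n • f a = 0
    rw [Submonoid.smul_def] at hn ⊢
    rw [← map_smul, hn, map_zero]
  set f₁ : (A ⧸ Submodule.torsion R A) →ₗ[R] (B ⧸ Submodule.torsion R B) :=
    Submodule.mapQ _ _ f hle with hf₁def
  have hf₁ : Function.Injective f₁ := by
    rw [← LinearMap.ker_eq_bot, LinearMap.ker_eq_bot']
    intro a₁ ha₁
    obtain ⟨a, rfl⟩ := Submodule.Quotient.mk_surjective _ a₁
    rw [hf₁def, Submodule.mapQ_apply, Submodule.Quotient.mk_eq_zero] at ha₁
    obtain ⟨n, hn⟩ := ha₁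
    rw [Submodule.Quotient.mk_eq_zero]
    refine ⟨n, ?_⟩
    rw [Submonoid.smul_def] at hn ⊢
    apply hf
    rw [map_smul, hn, map_zero]
  -- Smith normal form for the range of f₁
  have hfree : Module.Free R (B ⧸ Submodule.torsion R B) := inferInstance
  let b := Module.Free.chooseBasis R (B ⧸ Submodule.torsion R B)
  obtain ⟨n, snf⟩ := (LinearMap.range f₁).smithNormalForm b
  obtain ⟨bM, bN, emb, a, hsnf⟩ := snf
  have ha : ∀ i, a i ≠ 0 := by
    intro i hai
    apply Module.Basis.ne_zero bN i
    apply Subtype.ext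
    have := hsnf i
    rw [hai, zero_smul] at this
    simpa using this
  set d : R := ∏ i, a i with hd
  have hdne : d ≠ 0 := Finset.prod_ne_zero_iff.mpr (fun i _ => ha i)
  -- the retraction up to d
  set toN : (B ⧸ Submodule.torsion R B) →ₗ[R] (LinearMap.range f₁) :=
    ∑ i, ((∏ j ∈ Finset.univ.erase i, a j) • ((bM.coord (emb i)).smulRight (bN i))) with htoN
  have htoN_eval : ∀ y : LinearMap.range f₁, toN (y : B ⧸ Submodule.torsion R B) = d • y := by
    have : toN ∘ₗ (LinearMap.range f₁).subtype = d • LinearMap.id := by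
      apply bN.ext
      intro i
      rw [LinearMap.comp_apply, Submodule.subtype_apply, htoN]
      rw [LinearMap.sum_apply]
      have hrepr : ∀ j, bM.repr (bN i : B ⧸ Submodule.torsion R B) (emb j)
          = if j = i then a i else 0 := by
        intro j
        rw [hsnf i, map_smul]
        simp only [Module.Basis.repr_self, Finsupp.smul_single, smul_eq_mul, mul_one]
        rw [Finsupp.single_apply]
        by_cases hji : j = i
        · simp [hji]
        · rw [if_neg (fun h => hji (emb.injective h).symm), if_neg hji]
      rw [Finset.sum_eq_single i]
      · simp only [LinearMap.smul_apply, LinearMap.smulRight_apply, Module.Basis.coord_apply,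
          LinearMap.id_apply]
        rw [hrepr i, if_pos rfl, smul_smul, hd,
          Finset.prod_erase_mul _ _ (Finset.mem_univ i)]
      · intro j _ hji
        simp only [LinearMap.smul_apply, LinearMap.smulRight_apply, Module.Basis.coord_apply]
        rw [hrepr j, if_neg hji, zero_smul, smul_zero]
      · intro h; exact absurd (Finset.mem_univ i) h
    intro y
    have := congrArg (fun φ => φ y) (congrArg DFunLike.coe this)
    simpa using this
  -- the splitting g with g ∘ f₁ = d • id
  set eA : (A ⧸ Submodule.torsion R A) ≃ₗ[R] (LinearMap.range f₁) :=
    LinearEquiv.ofInjective f₁ hf₁ with heA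
  set g : (B ⧸ Submodule.torsion R B) →ₗ[R] (A ⧸ Submodule.torsion R A) :=
    (eA.symm : (LinearMap.range f₁) →ₗ[R] (A ⧸ Submodule.torsion R A)) ∘ₗ toN with hg
  have hgf : g ∘ₗ f₁ = d • LinearMap.id := by
    apply LinearMap.ext
    intro a₀
    have h1 : f₁ a₀ = ((eA a₀ : LinearMap.range f₁) : B ⧸ Submodule.torsion R B) := by
      rfl
    rw [LinearMap.comp_apply, hg, LinearMap.comp_apply, h1, htoN_eval, map_smul,
      LinearEquiv.coe_coe, LinearEquiv.symm_apply_apply]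
    simp
  -- conclude
  refine ⟨d, hdne, ?_⟩
  intro x hx
  set q := lTensor T (Submodule.torsion R A).mkQ with hq
  have hinj : Function.Injective q := (lTensor_mkQ_torsion_bijective' hdiv A).1
  apply hinj
  rw [map_smul, map_zero]
  have hcomm : lTensor T f₁ (q x) = 0 := by
    rw [hq, ← LinearMap.comp_apply, ← lTensor_comp, Submodule.mapQ_mkQ, lTensor_comp,
      LinearMap.comp_apply, hx, map_zero]
  have : d • q x = lTensor T g (lTensor T f₁ (q x)) := by
    rw [← LinearMap.comp_apply, ← lTensor_comp, hgf, lTensor_smul, lTensor_id]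
    simp
  rw [this, hcomm, map_zero]
end Generic2

section GaloisAux

open Classical WeierstrassCurve WeierstrassCurve.Affine

variable (K L : Type) [Field K] [Field L]
    [Algebra K L] [FiniteDimensional K L] [IsGalois K L]
    (W : WeierstrassCurve K)

/-- A point of `E(L)` fixed by all of `Gal(L/K)` comes from `E(K)`. -/
lemma fixed_mem_range (P : (W.toAffine⁄L).Point)
    (hP : ∀ g : L ≃ₐ[K] L, Point.map (W' := W.toAffine) g.toAlgHom P = P) :
    ∃ Q : (W.toAffine⁄K).Point, Point.baseChange (W' := W.toAffine) K L Q = P := by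
  cases P with
  | zero => exact ⟨0, map_zero _⟩
  | some x y h =>
    have hx : ∀ g : L ≃ₐ[K] L, g x = x := by
      intro g
      have := hP g
      rw [Point.map_some] at this
      exact (Point.some.inj this).1
    have hy : ∀ g : L ≃ₐ[K] L, g y = y := by
      intro g
      have := hP g
      rw [Point.map_some] at this
      exact (Point.some.inj this).2
    have hx' : x ∈ IntermediateField.fixedField
        (IntermediateField.fixingSubgroup (⊥ : IntermediateField K L)) := fun g => hx g
    have hy' : y ∈ IntermediateField.fixedField
        (IntermediateField.fixingSubgroup (⊥ : IntermediateField K L)) := fun g => hy g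
    rw [IsGalois.fixedField_fixingSubgroup, IntermediateField.mem_bot] at hx' hy'
    obtain ⟨x₀, hx₀⟩ := hx'
    obtain ⟨y₀, hy₀⟩ := hy'
    subst hx₀
    subst hy₀
    have h' : (W.toAffine⁄L).Nonsingular
        ((Algebra.ofId K L) x₀) ((Algebra.ofId K L) y₀) := h
    have hQ := (W.toAffine.baseChange_nonsingular
      (f := Algebra.ofId K L) (algebraMap K L).injective x₀ y₀).mp h'
    exact ⟨Point.some _ _ hQ, rfl⟩

end GaloisAux

end Statement11Aux

open LinearMap TensorProduct in
open Classical WeierstrassCurve WeierstrassCurve.Affine in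
/-- Let `L/K` be a finite Galois extension of number fields with Galois group
`G = Gal(L/K)` and let `E = W` be an elliptic curve over `K` (with `E(L)` finitely generated, by
the Mordell–Weil theorem).  The natural map `E(K) ⊗_ℤ ℚp/ℤp → (E(L) ⊗_ℤ ℚp/ℤp)^G` induced by the
inclusion `E(K) ⊆ E(L)`, whose image lands in the `G`-invariants, has finite kernel and finite
cokernel. -/
theorem statement11 (p : ℕ) [Fact p.Prime] (hp5 : 5 ≤ p)
    (K L : Type) [Field K] [NumberField K] [Field L] [NumberField L]
    [Algebra K L] [FiniteDimensional K L] [IsGalois K L]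
    (W : WeierstrassCurve K) [W.IsElliptic]
    (hMW : Module.Finite ℤ ((W.toAffine⁄L).Point)) :
    ∃ ψ : TensorProduct ℤ (QZ p) ((W.toAffine⁄K).Point) →+ ↥(galInv p K L W),
      (∀ x, (ψ x : TensorProduct ℤ (QZ p) ((W.toAffine⁄L).Point)) =
        TensorProduct.map (LinearMap.id (R := ℤ) (M := QZ p))
          (Point.baseChange (W' := W.toAffine) K L).toIntLinearMap x) ∧
      Finite ψ.ker ∧
      Finite (↥(galInv p K L W) ⧸ ψ.range) := by
  classical
  set f : (W.toAffine⁄K).Point →ₗ[ℤ] (W.toAffine⁄L).Point :=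
    (Point.baseChange (W' := W.toAffine) K L).toIntLinearMap with hfdef
  have hf : Function.Injective f := Point.map_injective (W' := W.toAffine) (f := Algebra.ofId K L)
  have hcomp : ∀ g : L ≃ₐ[K] L,
      (Point.map (W' := W.toAffine) g.toAlgHom).toIntLinearMap ∘ₗ f = f := by
    intro g
    apply LinearMap.ext
    intro P
    exact Point.map_baseChange (W' := W.toAffine) g.toAlgHom P
  have hmem : ∀ x, (lTensor (QZ p) f) x ∈ galInv p K L W := by
    intro x g
    show lTensor (QZ p) (Point.map (W' := W.toAffine) g.toAlgHom).toIntLinearMap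
      (lTensor (QZ p) f x) = lTensor (QZ p) f x
    rw [← LinearMap.comp_apply, ← lTensor_comp, hcomp g]
  set ψ : TensorProduct ℤ (QZ p) ((W.toAffine⁄K).Point) →+ ↥(galInv p K L W) :=
    AddMonoidHom.codRestrict (lTensor (QZ p) f).toAddMonoidHom (galInv p K L W) hmem
    with hψdef
  have hψcoe : ∀ x, (ψ x : TensorProduct ℤ (QZ p) ((W.toAffine⁄L).Point)) = lTensor (QZ p) f x :=
    fun x => rfl
  refine ⟨ψ, fun x => rfl, ?_, ?_⟩
  · -- finite kernel
    have hEK : Module.Finite ℤ ((W.toAffine⁄K).Point) := by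
      have hNoeth : IsNoetherian ℤ ((W.toAffine⁄L).Point) :=
        isNoetherian_of_isNoetherianRing_of_finite ℤ _
      exact Module.Finite.of_injective f hf
    obtain ⟨d, hd, hker⟩ := split_lemma (T := QZ p) (qz_div p) f hf
    refine main_fin p _ (qz_div p) ↥ψ.ker d hd ?_ ψ.ker (AddMonoidHom.id _)
      Function.surjective_id
    intro c
    apply Subtype.ext
    show d • (c : TensorProduct ℤ (QZ p) ((W.toAffine⁄K).Point)) = 0
    apply hker
    have : ψ c = 0 := c.2
    rw [← hψcoe c, this]
    rfl
  · -- finite cokernel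
    have hcard : (Fintype.card (L ≃ₐ[K] L) : ℤ) ≠ 0 := by
      exact_mod_cast Fintype.card_pos.ne'
    -- the norm map
    set Nl : (W.toAffine⁄L).Point →ₗ[ℤ] (W.toAffine⁄L).Point :=
      ∑ g : L ≃ₐ[K] L, (Point.map (W' := W.toAffine) g.toAlgHom).toIntLinearMap with hNl
    have hNrange : ∀ P, Nl P ∈ LinearMap.range f := by
      intro P
      have hfix : ∀ g' : L ≃ₐ[K] L, Point.map (W' := W.toAffine) g'.toAlgHom (Nl P) = Nl P := by
        intro g'
        rw [hNl, LinearMap.sum_apply, map_sum]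
        calc ∑ g : L ≃ₐ[K] L, Point.map (W' := W.toAffine) g'.toAlgHom
              ((Point.map (W' := W.toAffine) g.toAlgHom).toIntLinearMap P)
            = ∑ g : L ≃ₐ[K] L,
              (Point.map (W' := W.toAffine) ((Equiv.mulLeft g') g).toAlgHom).toIntLinearMap P := by
              apply Finset.sum_congr rfl
              intro g _
              show Point.map (W' := W.toAffine) g'.toAlgHom (Point.map (W' := W.toAffine) g.toAlgHom P) = _
              rw [Point.map_map]
              have halg : (g'.toAlgHom.comp g.toAlgHom) = ((Equiv.mulLeft g') g).toAlgHom := by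
                apply AlgHom.ext; intro z; rfl
              rw [halg]
              rfl
          _ = ∑ g : L ≃ₐ[K] L, (Point.map (W' := W.toAffine) g.toAlgHom).toIntLinearMap P :=
              Equiv.sum_comp (Equiv.mulLeft g')
                (fun g => (Point.map (W' := W.toAffine) g.toAlgHom).toIntLinearMap P)
      obtain ⟨Q, hQ⟩ := fixed_mem_range K L W (Nl P) hfix
      exact ⟨Q, hQ⟩
    -- a map r with f ∘ r = Nl
    set r : (W.toAffine⁄L).Point →ₗ[ℤ] (W.toAffine⁄K).Point :=
      ((LinearEquiv.ofInjective f hf).symm :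
        LinearMap.range f →ₗ[ℤ] (W.toAffine⁄K).Point) ∘ₗ
        (Nl.codRestrict (LinearMap.range f) hNrange) with hr
    have hfr : f ∘ₗ r = Nl := by
      apply LinearMap.ext
      intro P
      have key : ∀ y : LinearMap.range f, f ((LinearEquiv.ofInjective f hf).symm y) = y := by
        intro y
        conv_rhs => rw [← (LinearEquiv.ofInjective f hf).apply_symm_apply y]
        rfl
      exact key ⟨Nl P, hNrange P⟩
    -- every invariant element times |G| is in the range of ψ
    have hnorm : ∀ x : ↥(galInv p K L W),
        (Fintype.card (L ≃ₐ[K] L) : ℤ) • x ∈ ψ.range := by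
      intro x
      have hNx : lTensor (QZ p) Nl (x : TensorProduct ℤ (QZ p) ((W.toAffine⁄L).Point))
          = (Fintype.card (L ≃ₐ[K] L) : ℤ) • (x : TensorProduct ℤ (QZ p) ((W.toAffine⁄L).Point)) := by
        have hsum : lTensor (QZ p) Nl = ∑ g : L ≃ₐ[K] L,
            lTensor (QZ p) (Point.map (W' := W.toAffine) g.toAlgHom).toIntLinearMap := by
          rw [hNl]
          exact map_sum (lTensorHom (QZ p)) _ _
        rw [hsum, LinearMap.sum_apply]
        have hterm : ∀ g : L ≃ₐ[K] L,
            lTensor (QZ p) (Point.map (W' := W.toAffine) g.toAlgHom).toIntLinearMap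
              (x : TensorProduct ℤ (QZ p) ((W.toAffine⁄L).Point))
            = (x : TensorProduct ℤ (QZ p) ((W.toAffine⁄L).Point)) := fun g => x.2 g
        rw [Finset.sum_congr rfl (fun g _ => hterm g), Finset.sum_const, Finset.card_univ,
          natCast_zsmul]
      refine ⟨lTensor (QZ p) r (x : TensorProduct ℤ (QZ p) ((W.toAffine⁄L).Point)), ?_⟩
      apply Subtype.ext
      rw [hψcoe]
      show lTensor (QZ p) f (lTensor (QZ p) r (x : TensorProduct ℤ (QZ p) ((W.toAffine⁄L).Point)))
        = ((Fintype.card (L ≃ₐ[K] L) : ℤ) • x : ↥(galInv p K L W))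
      rw [← LinearMap.comp_apply, ← lTensor_comp, hfr, hNx]
      rfl
    -- conclude via the master finiteness lemma
    refine main_fin p ((W.toAffine⁄L).Point) (qz_div p) _
      (Fintype.card (L ≃ₐ[K] L) : ℤ) hcard ?_ (galInv p K L W)
      (QuotientAddGroup.mk' ψ.range) (QuotientAddGroup.mk'_surjective _)
    intro c
    obtain ⟨x, rfl⟩ := QuotientAddGroup.mk'_surjective ψ.range c
    rw [← map_zsmul, QuotientAddGroup.mk'_apply, QuotientAddGroup.eq_zero_iff]
    exact hnorm x
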